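/- Let c be an ad-nilpotent ideal of b and α a simple root. Then: (i) (|c|,α) ≥ 0; (ii) the root space g_{−α} is contained in the normalizer n_g(c) if and only if (|c|,α) = 0; (iii) (|c|,α) = 0 if and only if (Σ_{k≥1} |c^k|, α) = 0, where c¹ = c and c^k = [c^{k−1}, c] for k ≥ 2. In particular the weight |c| is a dominant weight and the normalizer n_g(c) is completely determined by |c|. -/

import Mathlib

open scoped RealInnerProductSpace
open scoped Classical

set_option linter.unusedSectionVars false

set_option maxHeartbeats 1000000

noncomputable section

/-- Axiomatization of the root system (with a fixed base and positive system) of a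
complex simple Lie algebra `g` with Cartan subalgebra `t ⊆ b`: a finite, reduced,
crystallographic root system, invariant under its reflections, in a euclidean vector
space `V` (the real span of the roots, with a Weyl-group-invariant inner product),
together with the set `Pi` of simple roots and the set `Δpos` of positive roots. -/
structure RootSystemData (V : Type*) [NormedAddCommGroup V] [InnerProductSpace ℝ V]
    [FiniteDimensional ℝ V] where
  /-- the set of all roots -/
  Δ : Finset V
  /-- the set of simple roots -/
  Pi : Finset V
  /-- the set of positive roots -/
  Δpos : Finset V
  zero_not_mem : (0 : V) ∉ Δ
  neg_mem : ∀ ⦃α⦄, α ∈ Δ → -α ∈ Δ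
  reflect_mem : ∀ ⦃α⦄, α ∈ Δ → ∀ ⦃β⦄, β ∈ Δ → β - (2 * ⟪β, α⟫ / ⟪α, α⟫) • α ∈ Δ
  crystallographic : ∀ ⦃α⦄, α ∈ Δ → ∀ ⦃β⦄, β ∈ Δ → ∃ n : ℤ, 2 * ⟪β, α⟫ = n * ⟪α, α⟫
  reduced : ∀ ⦃α⦄, α ∈ Δ → ∀ t : ℝ, t • α ∈ Δ → t = 1 ∨ t = -1
  Pi_subset : Pi ⊆ Δpos
  Pi_indep : LinearIndependent ℝ (Subtype.val : {x : V // x ∈ Pi} → V)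
  Pi_span : Submodule.span ℝ (Pi : Set V) = ⊤
  Δpos_subset : Δpos ⊆ Δ
  mem_Δpos_iff : ∀ ⦃γ⦄, γ ∈ Δ →
    (γ ∈ Δpos ↔ ∃ c : V → ℕ, γ = ∑ α ∈ Pi, (c α : ℝ) • α)
  pos_or_neg : ∀ ⦃γ⦄, γ ∈ Δ → γ ∈ Δpos ∨ -γ ∈ Δpos

variable {V : Type*} [NormedAddCommGroup V] [InnerProductSpace ℝ V] [FiniteDimensional ℝ V]

/-- `θ` is the highest root: `θ ∈ Δ⁺` and `γ ≼ θ` for every positive root `γ`. -/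
def RootSystemData.IsHighestRoot (R : RootSystemData V) (θ : V) : Prop :=
  θ ∈ R.Δpos ∧ ∀ γ ∈ R.Δpos, ∃ c : V → ℕ, θ - γ = ∑ α ∈ R.Pi, (c α : ℝ) • α

/-- An upper ideal of the root poset `(Δ⁺, ≼)`: a subset `I ⊆ Δ⁺` such that if
`γ ∈ I`, `μ ∈ Δ⁺` and `γ + μ` is a root, then `γ + μ ∈ I`.  Upper ideals correspond
bijectively to the ad-nilpotent ideals `c = ⊕_{γ ∈ I} g_γ` of the Borel subalgebra
`b` (the ideals of `b` contained in `u = [b, b]`). -/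
def RootSystemData.IsUpperIdeal (R : RootSystemData V) (I : Finset V) : Prop :=
  I ⊆ R.Δpos ∧ ∀ γ ∈ I, ∀ μ ∈ R.Δpos, γ + μ ∈ R.Δ → γ + μ ∈ I

/-- The weight `|c| = Σ_{γ ∈ I_c} γ` of an ad-nilpotent ideal. -/
def idealWeight {V : Type*} [NormedAddCommGroup V] [InnerProductSpace ℝ V]
    [FiniteDimensional ℝ V] (I : Finset V) : V := ∑ γ ∈ I, γ

/-- The condition `g_{-α} ⊆ n_g(c)` for a simple root `α` and the ad-nilpotent ideal
`c = ⊕_{γ ∈ I} g_γ`.  Since `[g_{-α}, g_γ] = g_{γ-α}` when `γ - α` is a root,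
`[g_{-α}, g_α] ⊆ t` and `[g_{-α}, g_γ] = 0` otherwise (and `γ - α ∈ Δ` with
`γ ∈ Δ⁺`, `α` simple forces `γ - α ∈ Δ⁺`), the root space `g_{-α}` normalizes `c`
if and only if `α ∉ I` and `I` is closed under subtracting `α` inside `Δ`.
(The normalizer `n_g(c)` is the standard parabolic subalgebra generated by `b` and
those `g_{-α}`, `α ∈ Π`, satisfying this condition.) -/
def RootSystemData.NegSimpleRootInNormalizer (R : RootSystemData V) (I : Finset V)
    (α : V) : Prop :=
  α ∉ I ∧ ∀ γ ∈ I, γ - α ∈ R.Δ → γ - α ∈ I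

/-- The root sets of the lower central series `c¹ = c`, `c^{k+1} = [c^k, c]` of an
ad-nilpotent ideal: since `[g_γ, g_μ] = g_{γ+μ}` when `γ + μ` is a root, the root
set of `c^{k+1}` is `{γ + μ ∈ Δ : γ ∈ I_{c^k}, μ ∈ I_c}`.  Here `lcs I k` is the
root set of `c^{k+1}`. -/
def RootSystemData.lcs (R : RootSystemData V) (I : Finset V) : ℕ → Finset V
  | 0 => I
  | (k+1) => R.Δpos.filter fun β => ∃ γ ∈ R.lcs I k, ∃ μ ∈ I, β = γ + μ

namespace RootSystemData

variable (R : RootSystemData V)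

/-! ### Elementary facts -/

lemma root_ne_zero {γ : V} (h : γ ∈ R.Δ) : γ ≠ 0 := fun e => R.zero_not_mem (e ▸ h)

lemma inner_self_pos_of_mem {γ : V} (h : γ ∈ R.Δ) : 0 < ⟪γ, γ⟫ := by
  have hne : ⟪γ,γ⟫ ≠ 0 := by simpa [inner_self_eq_zero] using R.root_ne_zero h
  exact lt_of_le_of_ne real_inner_self_nonneg (Ne.symm hne)

lemma coeff_eq_zero (f : V → ℝ) (h : ∑ i ∈ R.Pi, f i • i = 0) : ∀ i ∈ R.Pi, f i = 0 := by
  intro i hi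
  have h' : ∑ j ∈ Finset.univ, (fun j : {x : V // x ∈ R.Pi} => f j.1) j • (j : V) = 0 := by
    rw [Finset.univ_eq_attach, Finset.sum_attach R.Pi (fun j => f j • j)]; exact h
  exact linearIndependent_iff'.mp R.Pi_indep Finset.univ _ h' ⟨i, hi⟩ (Finset.mem_univ _)

lemma not_neg_mem_pos {γ : V} (h : γ ∈ R.Δpos) (h' : -γ ∈ R.Δpos) : False := by
  obtain ⟨c, hc⟩ := (R.mem_Δpos_iff (R.Δpos_subset h)).mp h
  obtain ⟨d, hd⟩ := (R.mem_Δpos_iff (R.Δpos_subset h')).mp h'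
  have hsum : ∑ i ∈ R.Pi, ((c i : ℝ) + (d i : ℝ)) • i = 0 := by
    calc ∑ i ∈ R.Pi, ((c i : ℝ) + (d i : ℝ)) • i
        = (∑ i ∈ R.Pi, (c i : ℝ) • i) + ∑ i ∈ R.Pi, (d i : ℝ) • i := by
          simp [add_smul, Finset.sum_add_distrib]
      _ = γ + -γ := by rw [← hc, ← hd]
      _ = 0 := by abel
  have hz := R.coeff_eq_zero _ hsum
  have hγ0 : γ = 0 := by
    rw [hc]
    refine Finset.sum_eq_zero fun i hi => ?_
    have h1 := hz i hi
    have hci : (c i : ℝ) = 0 := by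
      nlinarith [Nat.cast_nonneg (α := ℝ) (c i), Nat.cast_nonneg (α := ℝ) (d i)]
    rw [hci, zero_smul]
  exact R.root_ne_zero (R.Δpos_subset h) hγ0

lemma pos_ne_neg {x y : V} (hx : x ∈ R.Δpos) (hy : y ∈ R.Δpos) : x ≠ -y := by
  intro e
  exact R.not_neg_mem_pos hy (by rw [← e]; simpa using hx)

lemma sum_pos_mem {x y : V} (hx : x ∈ R.Δpos) (hy : y ∈ R.Δpos) (hxy : x + y ∈ R.Δ) :
    x + y ∈ R.Δpos := by
  rcases R.pos_or_neg hxy with h | h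
  · exact h
  · exfalso
    obtain ⟨c, hc⟩ := (R.mem_Δpos_iff (R.Δpos_subset hx)).mp hx
    obtain ⟨d, hd⟩ := (R.mem_Δpos_iff (R.Δpos_subset hy)).mp hy
    obtain ⟨e, he⟩ := (R.mem_Δpos_iff (R.Δpos_subset h)).mp h
    have hsum : ∑ i ∈ R.Pi, ((c i : ℝ) + (d i : ℝ) + (e i : ℝ)) • i = 0 := by
      calc ∑ i ∈ R.Pi, ((c i : ℝ) + (d i : ℝ) + (e i : ℝ)) • i
          = ((∑ i ∈ R.Pi, (c i : ℝ) • i) + ∑ i ∈ R.Pi, (d i : ℝ) • i)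
            + ∑ i ∈ R.Pi, (e i : ℝ) • i := by
            simp [add_smul, Finset.sum_add_distrib]
        _ = (x + y) + -(x + y) := by rw [← hc, ← hd, ← he]
        _ = 0 := by abel
    have hz := R.coeff_eq_zero _ hsum
    have hx0 : x = 0 := by
      rw [hc]
      refine Finset.sum_eq_zero fun i hi => ?_
      have h1 := hz i hi
      have hci : (c i : ℝ) = 0 := by
        nlinarith [Nat.cast_nonneg (α := ℝ) (c i), Nat.cast_nonneg (α := ℝ) (d i),
          Nat.cast_nonneg (α := ℝ) (e i)]
      rw [hci, zero_smul]
    exact R.root_ne_zero (R.Δpos_subset hx) hx0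

lemma sum_pos_ne_zero {x y : V} (hx : x ∈ R.Δpos) (hy : y ∈ R.Δpos) : x + y ≠ 0 := by
  intro e
  exact R.pos_ne_neg hx hy (by linear_combination (norm := abel) e)

/-! ### Adding and subtracting roots -/

lemma sub_mem_of_inner_pos {β δ : V} (hβ : β ∈ R.Δ) (hδ : δ ∈ R.Δ)
    (hpos : 0 < ⟪β, δ⟫) (hne : β ≠ δ) : β - δ ∈ R.Δ := by
  obtain ⟨n, hn⟩ := R.crystallographic hδ hβ
  obtain ⟨m, hm⟩ := R.crystallographic hβ hδ
  have hδδ := R.inner_self_pos_of_mem hδ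
  have hββ := R.inner_self_pos_of_mem hβ
  have hcomm : ⟪δ, β⟫ = ⟪β, δ⟫ := real_inner_comm β δ
  have hn1 : 1 ≤ n := by
    by_contra hcon
    push_neg at hcon
    have hn0 : n ≤ 0 := by omega
    have : (n : ℝ) ≤ 0 := by exact_mod_cast hn0
    nlinarith
  have hm1 : 1 ≤ m := by
    by_contra hcon
    push_neg at hcon
    have hm0 : m ≤ 0 := by omega
    have : (m : ℝ) ≤ 0 := by exact_mod_cast hm0
    nlinarith
  rcases eq_or_lt_of_le hn1 with h1 | h1
  · -- n = 1 : reflect β in δ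
    have hc : 2 * ⟪β, δ⟫ / ⟪δ, δ⟫ = 1 := by
      rw [hn, ← h1]; field_simp; norm_num
    have := R.reflect_mem hδ hβ
    rwa [hc, one_smul] at this
  rcases eq_or_lt_of_le hm1 with h2 | h2
  · -- m = 1 : reflect δ in β
    have hc : 2 * ⟪δ, β⟫ / ⟪β, β⟫ = 1 := by
      rw [hm, ← h2]; field_simp; norm_num
    have := R.reflect_mem hβ hδ
    rw [hc, one_smul] at this
    have := R.neg_mem this
    rwa [neg_sub] at this
  · -- n ≥ 2 and m ≥ 2 : β and δ are parallel, contradiction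
    exfalso
    have hn2 : (2 : ℝ) ≤ (n : ℝ) := by exact_mod_cast h1
    have hm2 : (2 : ℝ) ≤ (m : ℝ) := by exact_mod_cast h2
    have e2 : 2 * ⟪β, δ⟫ = (m:ℝ) * ⟪β, β⟫ := by rw [← hcomm]; exact hm
    have f12 : (2 * ⟪β, δ⟫) * (2 * ⟪β, δ⟫) = ((n:ℝ) * ⟪δ, δ⟫) * ((m:ℝ) * ⟪β, β⟫) := by
      rw [← hn, ← e2]
    have f3 : (4:ℝ) ≤ (n:ℝ) * (m:ℝ) := by
      have : (4:ℤ) ≤ n * m := by nlinarith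
      exact_mod_cast this
    have f4 : 0 ≤ ((n:ℝ) * (m:ℝ) - 4) * (⟪δ, δ⟫ * ⟪β, β⟫) :=
      mul_nonneg (by linarith) (le_of_lt (mul_pos hδδ hββ))
    have hb2 : ⟪β, β⟫ * ⟪δ, δ⟫ ≤ ⟪β, δ⟫ * ⟪β, δ⟫ := by nlinarith [f12, f4]
    set w : V := ⟪δ, δ⟫ • β - ⟪β, δ⟫ • δ with hw
    have hw0 : w = 0 := by
      have hww : ⟪w, w⟫ ≤ 0 := by
        have : ⟪w, w⟫ = ⟪δ,δ⟫ * ⟪δ,δ⟫ * ⟪β,β⟫ - ⟪δ,δ⟫ * (⟪β,δ⟫ * ⟪β,δ⟫) := by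
          simp only [hw, inner_sub_left, inner_sub_right, real_inner_smul_left,
            real_inner_smul_right]
          rw [hcomm]; ring
        nlinarith
      exact inner_self_eq_zero.mp (le_antisymm hww real_inner_self_nonneg)
    have hβeq : β = (⟪β, δ⟫ / ⟪δ, δ⟫) • δ := by
      have heq : ⟪δ, δ⟫ • β = ⟪β, δ⟫ • δ := sub_eq_zero.mp hw0
      have h6 := congrArg (fun v => (⟪δ, δ⟫)⁻¹ • v) heq
      simp only [smul_smul] at h6
      rw [inv_mul_cancel₀ (ne_of_gt hδδ), one_smul] at h6
      rw [div_eq_inv_mul]; exact h6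
    have := R.reduced hδ (⟪β, δ⟫ / ⟪δ, δ⟫) (by rw [← hβeq]; exact hβ)
    rcases this with h | h
    · exact hne (by rw [hβeq, h, one_smul])
    · have : β = -δ := by rw [hβeq, h, neg_one_smul]
      rw [this] at hpos
      rw [inner_neg_left] at hpos
      nlinarith

lemma add_mem_of_inner_neg {β δ : V} (hβ : β ∈ R.Δ) (hδ : δ ∈ R.Δ)
    (hneg : ⟪β, δ⟫ < 0) (hne : β ≠ -δ) : β + δ ∈ R.Δ := by
  have h := R.sub_mem_of_inner_pos hβ (R.neg_mem hδ)
    (by rw [inner_neg_right]; linarith) hne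
  rwa [sub_neg_eq_add] at h

lemma inner_nonneg_of_not_add {β δ : V} (hβ : β ∈ R.Δ) (hδ : δ ∈ R.Δ)
    (hne : β ≠ -δ) (hnot : β + δ ∉ R.Δ) : 0 ≤ ⟪β, δ⟫ := by
  by_contra hcon
  push_neg at hcon
  exact hnot (R.add_mem_of_inner_neg hβ hδ hcon hne)

/-- The Jacobi-identity lemma: if `γ, μ, γ+μ, γ+μ+α` are all roots then `γ+α` or
`μ+α` is a root (or `γ = -α` or `μ = -α`). -/
lemma jacobi {γ μ α : V} (hγ : γ ∈ R.Δ) (hμ : μ ∈ R.Δ) (hα : α ∈ R.Δ)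
    (hβ : γ + μ ∈ R.Δ) (hσ : γ + μ + α ∈ R.Δ)
    (hγα : γ ≠ -α) (hμα : μ ≠ -α)
    (hγαn : γ + α ∉ R.Δ) (hμαn : μ + α ∉ R.Δ) : False := by
  have ha : 0 ≤ ⟪γ, α⟫ := R.inner_nonneg_of_not_add hγ hα hγα hγαn
  have hb : 0 ≤ ⟪μ, α⟫ := R.inner_nonneg_of_not_add hμ hα hμα hμαn
  have hαα := R.inner_self_pos_of_mem hα
  set σ := γ + μ + α with hσdef
  have hσγ : ⟪σ, γ⟫ ≤ 0 := by
    by_contra hcon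
    push_neg at hcon
    have hne : σ ≠ γ := by
      intro e
      have e' : γ + (μ + α) = γ := by rw [← add_assoc, ← hσdef, e]
      exact hμα (eq_neg_of_add_eq_zero_left (add_eq_left.mp e'))
    have hmem := R.sub_mem_of_inner_pos hσ hγ hcon hne
    rw [show σ - γ = μ + α by rw [hσdef]; abel] at hmem
    exact hμαn hmem
  have hσμ : ⟪σ, μ⟫ ≤ 0 := by
    by_contra hcon
    push_neg at hcon
    have hne : σ ≠ μ := by
      intro e
      have e' : μ + (γ + α) = μ := by rw [show μ + (γ + α) = γ + μ + α by abel, ← hσdef, e]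
      exact hγα (eq_neg_of_add_eq_zero_left (add_eq_left.mp e'))
    have hmem := R.sub_mem_of_inner_pos hσ hμ hcon hne
    rw [show σ - μ = γ + α by rw [hσdef]; abel] at hmem
    exact hγαn hmem
  have h1 : ⟪σ, σ⟫ ≤ ⟪σ, α⟫ := by
    have : ⟪σ, σ⟫ = ⟪σ, γ⟫ + ⟪σ, μ⟫ + ⟪σ, α⟫ := by
      conv_lhs => rw [hσdef]
      rw [inner_add_right, inner_add_right]
    linarith
  have h2 : ⟪α, α⟫ ≤ ⟪σ, α⟫ := by
    have : ⟪σ, α⟫ = ⟪γ, α⟫ + ⟪μ, α⟫ + ⟪α, α⟫ := by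
      rw [hσdef, inner_add_left, inner_add_left]
    linarith
  have h3 : ⟪σ - α, σ - α⟫ ≤ 0 := by
    have hca : ⟪α, σ⟫ = ⟪σ, α⟫ := real_inner_comm σ α
    rw [inner_sub_left, inner_sub_right, inner_sub_right]
    linarith
  have h4 : σ - α = 0 := inner_self_eq_zero.mp (le_antisymm h3 real_inner_self_nonneg)
  have h5 : γ + μ = 0 := by
    have h6 : σ = α := sub_eq_zero.mp h4
    have h7 : γ + μ + α = 0 + α := by rw [zero_add, ← hσdef, h6]
    exact add_right_cancel h7
  exact R.root_ne_zero hβ h5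

/-! ### The simple reflection -/

/-- Reflection in the hyperplane orthogonal to `α`. -/
def sRefl (α x : V) : V := x - (2 * ⟪x, α⟫ / ⟪α, α⟫) • α

lemma sRefl_mem {α x : V} (hα : α ∈ R.Δ) (hx : x ∈ R.Δ) : sRefl α x ∈ R.Δ :=
  R.reflect_mem hα hx

variable {α : V}

lemma inner_sRefl (hαα : ⟪α, α⟫ ≠ 0) (x : V) : ⟪sRefl α x, α⟫ = -⟪x, α⟫ := by
  rw [sRefl, inner_sub_left, real_inner_smul_left]
  field_simp
  ring

lemma sRefl_add (x y : V) : sRefl α (x + y) = sRefl α x + sRefl α y := by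
  simp only [sRefl, inner_add_left]
  rw [show 2 * (⟪x,α⟫ + ⟪y,α⟫) / ⟪α,α⟫ = 2 * ⟪x,α⟫ / ⟪α,α⟫ + 2 * ⟪y,α⟫ / ⟪α,α⟫ by ring,
    add_smul]
  abel

lemma sRefl_sRefl (hαα : ⟪α, α⟫ ≠ 0) (x : V) : sRefl α (sRefl α x) = x := by
  conv_lhs => rw [sRefl, inner_sRefl hαα]
  rw [sRefl]
  rw [show 2 * -⟪x,α⟫ / ⟪α,α⟫ = -(2 * ⟪x,α⟫ / ⟪α,α⟫) by ring, neg_smul]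
  abel

lemma sRefl_eq_self_iff (hα0 : α ≠ 0) (hαα : ⟪α, α⟫ ≠ 0) (x : V) :
    sRefl α x = x ↔ ⟪x, α⟫ = 0 := by
  constructor
  · intro h
    have : (2 * ⟪x,α⟫ / ⟪α,α⟫) • α = 0 := by
      have := sub_eq_zero.mpr h.symm
      rw [sRefl] at h
      have h2 : x - (x - (2 * ⟪x,α⟫ / ⟪α,α⟫) • α) = 0 := by rw [h]; abel
      rw [sub_sub_cancel] at h2
      exact h2
    rcases smul_eq_zero.mp this with h | h
    · field_simp at h
      linarith
    · exact absurd h hα0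
  · intro h
    rw [sRefl, h]
    simp

lemma sRefl_eq_add {m : ℝ} (hαα : ⟪α, α⟫ ≠ 0) {x : V} (hm : 2 * ⟪x, α⟫ = -m * ⟪α, α⟫) :
    sRefl α x = x + m • α := by
  rw [sRefl]
  have hc : 2 * ⟪x,α⟫ / ⟪α,α⟫ = -m := by rw [hm]; field_simp
  rw [hc, neg_smul, sub_neg_eq_add]

lemma sRefl_eq_sub {m : ℝ} (hαα : ⟪α, α⟫ ≠ 0) {x : V} (hm : 2 * ⟪x, α⟫ = m * ⟪α, α⟫) :
    sRefl α x = x - m • α := by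
  rw [sRefl]
  have hc : 2 * ⟪x,α⟫ / ⟪α,α⟫ = m := by rw [hm]; field_simp
  rw [hc]

lemma sRefl_self (hαα : ⟪α, α⟫ ≠ 0) : sRefl α α = -α := by
  have : sRefl α α = α - (2:ℝ) • α := by
    apply sRefl_eq_sub hαα
    ring
  rw [this, two_smul]
  abel

lemma sRefl_neg (x : V) : sRefl α (-x) = -(sRefl α x) := by
  simp only [sRefl, inner_neg_left]
  rw [show 2 * -⟪x,α⟫ / ⟪α,α⟫ = -(2 * ⟪x,α⟫ / ⟪α,α⟫) by ring, neg_smul]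
  abel

lemma sRefl_sub (x y : V) : sRefl α (x - y) = sRefl α x - sRefl α y := by
  rw [sub_eq_add_neg, sRefl_add, sRefl_neg, ← sub_eq_add_neg]

/-! ### Root strings -/

/-- Unbroken root strings: if `⟨β, α∨⟩ = -m ≤ 0` then `β + jα` is a root for
`0 ≤ j ≤ m`. -/
lemma chain {β : V} (hβ : β ∈ R.Δ) (hα : α ∈ R.Δ) (hβ1 : β ≠ α) (hβ2 : β ≠ -α)
    (m : ℕ) (hm : 2 * ⟪β, α⟫ = -(m : ℝ) * ⟪α, α⟫) :
    ∀ j : ℕ, j ≤ m → β + (j : ℝ) • α ∈ R.Δ := by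
  have hαα := R.inner_self_pos_of_mem hα
  intro j
  induction j using Nat.strong_induction_on with
  | _ j ih =>
    intro hj
    match j, hj with
    | 0, _ => simpa using hβ
    | (j+1), hj =>
      have hjm : j + 1 ≤ m := hj
      have hx : β + (j : ℝ) • α ∈ R.Δ := ih j (Nat.lt_succ_self j) (by omega)
      have hnotpar : ∀ i : ℕ, i + 1 ≤ m → β + (i : ℝ) • α ≠ -α := by
        intro i hi e
        have hβpar : β = (-(i+1) : ℝ) • α := by
          have : β = -α - (i:ℝ) • α := by
            rw [← e]; abel
          rw [this]; rw [show (-(i+1) : ℝ) = -1 - i by ring, sub_smul]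
          simp [neg_smul]
        rcases R.reduced hα _ (by rw [← hβpar]; exact hβ) with h | h
        · have : (i : ℝ) + 1 = -1 := by linarith [h]
          nlinarith [Nat.cast_nonneg (α := ℝ) i]
        · have hi0 : (i : ℝ) = 0 := by linarith [h]
          have : β = -α := by
            rw [hβpar, show (-(i+1) : ℝ) = -1 by rw [hi0]; ring, neg_one_smul]
          exact hβ2 this
      by_cases hcase : 2 * j < m
      · -- add α to β + jα
        have hinner : ⟪β + (j:ℝ) • α, α⟫ < 0 := by
          rw [inner_add_left, real_inner_smul_left]
          have : (2:ℝ) * j < m := by exact_mod_cast hcase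
          nlinarith
        have := R.add_mem_of_inner_neg hx hα hinner (hnotpar j hjm)
        rw [show β + (j:ℝ) • α + α = β + ((j+1 : ℕ) : ℝ) • α by push_cast; rw [add_smul, one_smul]; abel] at this
        exact this
      · -- reflect β + iα with i = m - j - 1
        push_neg at hcase
        set i : ℕ := m - j - 1 with hidef
        have him : i + (j + 1) = m := by omega
        have hilt : i < j + 1 := by omega
        have hxi : β + (i : ℝ) • α ∈ R.Δ := ih i hilt (by omega)
        have hrefl := R.reflect_mem hα hxi
        have hci : 2 * ⟪β + (i:ℝ) • α, α⟫ / ⟪α,α⟫ = 2 * (i:ℝ) - m := by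
          rw [inner_add_left, real_inner_smul_left]
          field_simp
          linarith [hm]
        rw [hci] at hrefl
        have hmi : (m : ℝ) - (i:ℝ) = ((j+1 : ℕ) : ℝ) := by
          have : (i:ℝ) + ((j+1:ℕ):ℝ) = m := by exact_mod_cast him
          linarith
        have h7 : β + (i:ℝ) • α - (2 * (i:ℝ) - (m:ℝ)) • α = β + ((m:ℝ) - (i:ℝ)) • α := by
          module
        rw [h7, hmi] at hrefl
        exact hrefl

/-! ### Chains inside ideals -/

lemma exists_nat_of_inner_neg {β : V} (hβ : β ∈ R.Δ) (hα : α ∈ R.Δ)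
    (h : ⟪β, α⟫ < 0) : ∃ m : ℕ, 1 ≤ m ∧ 2 * ⟪β, α⟫ = -(m : ℝ) * ⟪α, α⟫ := by
  obtain ⟨n, hn⟩ := R.crystallographic hα hβ
  have hαα := R.inner_self_pos_of_mem hα
  have hneg : n < 0 := by
    by_contra hcon
    push_neg at hcon
    have : (0:ℝ) ≤ (n:ℝ) := by exact_mod_cast hcon
    nlinarith
  refine ⟨(-n).toNat, by omega, ?_⟩
  have : ((-n).toNat : ℝ) = -(n:ℝ) := by
    have : ((-n).toNat : ℤ) = -n := Int.toNat_of_nonneg (by omega)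
    exact_mod_cast congrArg (fun z : ℤ => (z:ℝ)) this
  rw [this, hn]; ring

lemma mem_chain_up {J : Finset V} (hα : α ∈ R.Δ)
    (hstep : ∀ β ∈ J, β + α ∈ R.Δ → β + α ∈ J) {β : V} (hβJ : β ∈ J) (hβΔ : β ∈ R.Δ)
    (hβ1 : β ≠ α) (hβ2 : β ≠ -α) (m : ℕ) (hm : 2 * ⟪β, α⟫ = -(m : ℝ) * ⟪α, α⟫) :
    ∀ j : ℕ, j ≤ m → β + (j : ℝ) • α ∈ J := by
  intro j
  induction j with
  | zero => intro _; simpa using hβJ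
  | succ j ih =>
    intro hj
    have hmem : β + (j:ℝ) • α ∈ J := ih (by omega)
    have hΔ : β + ((j+1 : ℕ) : ℝ) • α ∈ R.Δ := R.chain hβΔ hα hβ1 hβ2 m hm (j+1) hj
    have he : β + ((j+1 : ℕ) : ℝ) • α = (β + (j:ℝ) • α) + α := by
      push_cast; rw [add_smul, one_smul]; abel
    rw [he] at hΔ ⊢
    exact hstep _ hmem hΔ

/-- If `J ⊆ Δ⁺` is closed under adding `α` (inside `Δ`), then it is closed under the
reflection `s_α` applied to elements with negative inner product with `α`. -/
lemma stable_of_closed {J : Finset V} (hαp : α ∈ R.Δpos) (hJ : J ⊆ R.Δpos)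
    (hstep : ∀ β ∈ J, β + α ∈ R.Δ → β + α ∈ J) :
    ∀ β ∈ J, ⟪β, α⟫ < 0 → sRefl α β ∈ J := by
  intro β hβJ hneg
  have hα : α ∈ R.Δ := R.Δpos_subset hαp
  have hβΔ : β ∈ R.Δ := R.Δpos_subset (hJ hβJ)
  have hαα := R.inner_self_pos_of_mem hα
  have hβ1 : β ≠ α := by rintro rfl; nlinarith
  have hβ2 : β ≠ -α := R.pos_ne_neg (hJ hβJ) hαp
  obtain ⟨m, hm1, hm⟩ := R.exists_nat_of_inner_neg hβΔ hα hneg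
  have := R.mem_chain_up hα hstep hβJ hβΔ hβ1 hβ2 m hm m le_rfl
  rwa [sRefl_eq_add (ne_of_gt hαα) hm]

/-! ### The key sum computation -/

lemma sum_inner_key {J : Finset V} (hα0 : α ≠ 0) (hαα : ⟪α, α⟫ ≠ 0)
    (hcl : ∀ β ∈ J, ⟪β, α⟫ < 0 → sRefl α β ∈ J) :
    0 ≤ ∑ β ∈ J, ⟪β, α⟫ ∧
      ((∑ β ∈ J, ⟪β, α⟫) = 0 ↔ ∀ β ∈ J, sRefl α β ∈ J) := by
  have hsplit := Finset.sum_filter_add_sum_filter_not J (fun β => sRefl α β ∈ J)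
    (fun β => ⟪β, α⟫)
  have h0 : ∑ β ∈ J.filter (fun β => sRefl α β ∈ J), ⟪β, α⟫ = 0 := by
    refine Finset.sum_involution (fun β _ => sRefl α β) ?_ ?_ ?_ ?_
    · intro a _
      rw [inner_sRefl hαα]; ring
    · intro a _ hne e
      exact hne (((sRefl_eq_self_iff hα0 hαα a).mp e).symm ▸ rfl)
    · intro a ha
      have h' := Finset.mem_filter.mp ha
      exact Finset.mem_filter.mpr ⟨h'.2, by rw [sRefl_sRefl hαα]; exact h'.1⟩
    · intro a _
      exact sRefl_sRefl hαα a
  have hT : ∀ β ∈ J.filter (fun β => ¬ sRefl α β ∈ J), 0 ≤ ⟪β, α⟫ := by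
    intro β hβ
    obtain ⟨hβJ, hnp⟩ := Finset.mem_filter.mp hβ
    by_contra hcon
    push_neg at hcon
    exact hnp (hcl β hβJ hcon)
  have hsum_eq : ∑ β ∈ J, ⟪β, α⟫
      = ∑ β ∈ J.filter (fun β => ¬ sRefl α β ∈ J), ⟪β, α⟫ := by
    rw [← hsplit, h0, zero_add]
  constructor
  · rw [hsum_eq]; exact Finset.sum_nonneg hT
  constructor
  · intro hz β hβJ
    by_contra hnp
    have hβT : β ∈ J.filter (fun β => ¬ sRefl α β ∈ J) := Finset.mem_filter.mpr ⟨hβJ, hnp⟩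
    rw [hsum_eq] at hz
    have hz' := (Finset.sum_eq_zero_iff_of_nonneg hT).mp hz β hβT
    exact hnp (by rw [(sRefl_eq_self_iff hα0 hαα β).mpr hz']; exact hβJ)
  · intro hst
    rw [hsum_eq]
    have hempty : J.filter (fun β => ¬ sRefl α β ∈ J) = ∅ :=
      Finset.filter_eq_empty_iff.mpr (fun x hx => not_not_intro (hst x hx))
    rw [hempty, Finset.sum_empty]

/-! ### The lower central series -/

variable {I : Finset V}

lemma lcs_subset (hI : R.IsUpperIdeal I) : ∀ k, R.lcs I k ⊆ R.Δpos
  | 0 => hI.1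
  | (k+1) => Finset.filter_subset _ _

lemma lcs_upper (hI : R.IsUpperIdeal I) : ∀ k, R.IsUpperIdeal (R.lcs I k) := by
  intro k
  induction k with
  | zero => exact hI
  | succ k ih =>
    refine ⟨Finset.filter_subset _ _, ?_⟩
    intro β hβ ν hν hsum
    obtain ⟨hβpos, γ, hγ, μ, hμ, hbeq⟩ := Finset.mem_filter.mp hβ
    subst hbeq
    have hγpos : γ ∈ R.Δpos := R.lcs_subset hI k hγ
    have hμpos : μ ∈ R.Δpos := hI.1 hμ
    by_cases h1 : γ + ν ∈ R.Δ
    · have hγν : γ + ν ∈ R.lcs I k := ih.2 γ hγ ν hν h1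
      exact Finset.mem_filter.mpr ⟨R.sum_pos_mem hβpos hν hsum,
        ⟨γ + ν, hγν, μ, hμ, by abel⟩⟩
    · by_cases h2 : μ + ν ∈ R.Δ
      · have hμν : μ + ν ∈ I := hI.2 μ hμ ν hν h2
        exact Finset.mem_filter.mpr ⟨R.sum_pos_mem hβpos hν hsum,
          ⟨γ, hγ, μ + ν, hμν, by abel⟩⟩
      · exact (R.jacobi (R.Δpos_subset hγpos) (R.Δpos_subset hμpos) (R.Δpos_subset hν)
          (R.Δpos_subset hβpos) hsum (R.pos_ne_neg hγpos hν) (R.pos_ne_neg hμpos hν)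
          h1 h2).elim

/-- If `I` is stable under `s_α`, so is every term of the lower central series. -/
lemma lcs_stable (hI : R.IsUpperIdeal I) (hα : α ∈ R.Δ)
    (hst : ∀ β ∈ I, sRefl α β ∈ I) :
    ∀ k, ∀ β ∈ R.lcs I k, sRefl α β ∈ R.lcs I k := by
  intro k
  induction k with
  | zero => exact hst
  | succ k ih =>
    intro β hβ
    obtain ⟨hβpos, γ, hγ, μ, hμ, hbeq⟩ := Finset.mem_filter.mp hβ
    subst hbeq
    have hγ' : sRefl α γ ∈ R.lcs I k := ih γ hγ
    have hμ' : sRefl α μ ∈ I := hst μ hμ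
    have hΔ : sRefl α (γ + μ) ∈ R.Δ := R.sRefl_mem hα (R.Δpos_subset hβpos)
    rw [sRefl_add] at hΔ
    have hpos : sRefl α γ + sRefl α μ ∈ R.Δpos :=
      R.sum_pos_mem (R.lcs_subset hI k hγ') (hI.1 hμ') hΔ
    rw [sRefl_add]
    exact Finset.mem_filter.mpr ⟨hpos, sRefl α γ, hγ', sRefl α μ, hμ', rfl⟩

/-! ### The normalizer condition -/

lemma normalizer_iff_stable (hI : R.IsUpperIdeal I) (hαp : α ∈ R.Δpos) :
    R.NegSimpleRootInNormalizer I α ↔ ∀ β ∈ I, sRefl α β ∈ I := by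
  have hα : α ∈ R.Δ := R.Δpos_subset hαp
  have hαα := R.inner_self_pos_of_mem hα
  have hαα' : ⟪α, α⟫ ≠ 0 := ne_of_gt hαα
  have hα0 : α ≠ 0 := R.root_ne_zero hα
  constructor
  · rintro ⟨h1, h2⟩ β hβI
    have hβp : β ∈ R.Δpos := hI.1 hβI
    have hβΔ : β ∈ R.Δ := R.Δpos_subset hβp
    have hβ2 : β ≠ -α := R.pos_ne_neg hβp hαp
    have hβ1 : β ≠ α := fun e => h1 (e ▸ hβI)
    obtain ⟨n, hn⟩ := R.crystallographic hα hβΔ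
    rcases lt_trichotomy n 0 with hlt | heq | hgt
    · have hneg : ⟪β, α⟫ < 0 := by
        have h' : (n:ℝ) < 0 := by exact_mod_cast hlt
        nlinarith
      exact R.stable_of_closed hαp hI.1 (fun b hb hΔ => hI.2 b hb α hαp hΔ) β hβI hneg
    · have hz : ⟪β, α⟫ = 0 := by
        subst heq
        simp only [Int.cast_zero, zero_mul] at hn
        linarith
      rw [(sRefl_eq_self_iff hα0 hαα' β).mpr hz]
      exact hβI
    · set m : ℕ := n.toNat with hmdef
      have hmcast : ((m:ℕ) : ℝ) = (n : ℝ) := by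
        have : ((m:ℕ) : ℤ) = n := Int.toNat_of_nonneg (by omega)
        exact_mod_cast congrArg (fun z : ℤ => (z:ℝ)) this
      have hmR : 2 * ⟪β, α⟫ = (m : ℝ) * ⟪α, α⟫ := by rw [hmcast]; exact hn
      have hmneg : 2 * ⟪-β, α⟫ = -(m : ℝ) * ⟪α, α⟫ := by
        rw [inner_neg_left]; linarith
      have hchainΔ : ∀ j : ℕ, j ≤ m → β - (j:ℝ) • α ∈ R.Δ := by
        intro j hj
        have hnb1 : -β ≠ α := fun e => hβ2 (by rw [← neg_neg β, e])
        have hnb2 : -β ≠ -α := fun e => hβ1 (by rw [← neg_neg β, e, neg_neg])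
        have hmem := R.chain (R.neg_mem hβΔ) hα hnb1 hnb2 m hmneg j hj
        have := R.neg_mem hmem
        rwa [show -(-β + (j:ℝ) • α) = β - (j:ℝ) • α by abel] at this
      have hdown : ∀ j : ℕ, j ≤ m → β - (j:ℝ) • α ∈ I := by
        intro j
        induction j with
        | zero => intro _; simpa using hβI
        | succ j ih =>
          intro hj
          have hprev : β - (j:ℝ) • α ∈ I := ih (by omega)
          have he : β - ((j+1 : ℕ):ℝ) • α = (β - (j:ℝ) • α) - α := by
            push_cast; rw [add_smul, one_smul]; abel
          rw [he]
          exact h2 _ hprev (by rw [← he]; exact hchainΔ (j+1) hj)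
      have := hdown m le_rfl
      rwa [sRefl_eq_sub hαα' hmR]
  · intro hst
    have h1 : α ∉ I := by
      intro hαI
      have h' := hst α hαI
      rw [sRefl_self hαα'] at h'
      exact R.not_neg_mem_pos hαp (hI.1 h')
    refine ⟨h1, ?_⟩
    intro β hβI hd
    have hβp : β ∈ R.Δpos := hI.1 hβI
    have hβΔ : β ∈ R.Δ := R.Δpos_subset hβp
    have hβ1 : β ≠ α := fun e => h1 (e ▸ hβI)
    have hβ2 : β ≠ -α := R.pos_ne_neg hβp hαp
    obtain ⟨n, hn⟩ := R.crystallographic hα hβΔ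
    rcases le_or_gt n 0 with hle | hgt
    · have hsd : sRefl α (β - α) = sRefl α β + α := by
        rw [sRefl_sub, sRefl_self hαα', sub_neg_eq_add]
      have hsβ : sRefl α β ∈ I := hst β hβI
      have hsdΔ : sRefl α (β - α) ∈ R.Δ := R.sRefl_mem hα hd
      have hmem : sRefl α β + α ∈ I := hI.2 _ hsβ α hαp (by rw [← hsd]; exact hsdΔ)
      rw [← hsd] at hmem
      have h' := hst _ hmem
      rwa [sRefl_sRefl hαα'] at h'
    · set m : ℕ := n.toNat with hmdef
      have hm1 : 1 ≤ m := by omega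
      have hmcast : ((m:ℕ) : ℝ) = (n : ℝ) := by
        have : ((m:ℕ) : ℤ) = n := Int.toNat_of_nonneg (by omega)
        exact_mod_cast congrArg (fun z : ℤ => (z:ℝ)) this
      have hmR : 2 * ⟪β, α⟫ = (m : ℝ) * ⟪α, α⟫ := by rw [hmcast]; exact hn
      have hxI : sRefl α β ∈ I := hst β hβI
      have hxΔ : sRefl α β ∈ R.Δ := R.sRefl_mem hα hβΔ
      have hx_eq : sRefl α β = β - (m:ℝ) • α := sRefl_eq_sub hαα' hmR
      have hxinner : 2 * ⟪sRefl α β, α⟫ = -(m : ℝ) * ⟪α, α⟫ := by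
        rw [inner_sRefl hαα']; linarith
      have hx1 : sRefl α β ≠ α := by
        intro e
        have h' := congrArg (sRefl α) e
        rw [sRefl_sRefl hαα', sRefl_self hαα'] at h'
        exact hβ2 h'
      have hx2 : sRefl α β ≠ -α := by
        intro e
        have h' := congrArg (sRefl α) e
        rw [sRefl_sRefl hαα', sRefl_neg, sRefl_self hαα', neg_neg] at h'
        exact hβ1 h'
      have hup := R.mem_chain_up hα (fun b hb hΔ => hI.2 b hb α hαp hΔ) hxI hxΔ hx1 hx2
        m hxinner (m-1) (by omega)
      have he : sRefl α β + ((m-1 : ℕ):ℝ) • α = β - α := by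
        rw [hx_eq, Nat.cast_sub hm1]
        push_cast
        module
      rwa [he] at hup

/-! ### Finiteness of the lower central series -/

lemma lcs_eventually_empty (hI : R.IsUpperIdeal I) :
    ∃ N : ℕ, ∀ k, N ≤ k → R.lcs I k = ∅ := by
  have hsp : ⊤ ≤ Submodule.span ℝ (Set.range (Subtype.val : {x : V // x ∈ R.Pi} → V)) := by
    rw [Subtype.range_val]; exact R.Pi_span.ge
  set b := Module.Basis.mk R.Pi_indep hsp with hbdef
  set f : V →ₗ[ℝ] ℝ := b.sumCoords with hfdef
  have hf1 : ∀ i, ∀ hi : i ∈ R.Pi, f i = 1 := by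
    intro i hi
    have h' : (b ⟨i, hi⟩ : V) = i := Module.Basis.mk_apply R.Pi_indep hsp ⟨i, hi⟩
    rw [← h']
    exact Module.Basis.sumCoords_self_apply b ⟨i, hi⟩
  have hfpos : ∀ γ ∈ R.Δpos, 1 ≤ f γ := by
    intro γ hγ
    obtain ⟨c, hc⟩ := (R.mem_Δpos_iff (R.Δpos_subset hγ)).mp hγ
    have hfγ : f γ = ∑ i ∈ R.Pi, (c i : ℝ) := by
      rw [hc, map_sum]
      refine Finset.sum_congr rfl fun i hi => ?_
      rw [map_smul, hf1 i hi, smul_eq_mul, mul_one]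
    by_contra hcon
    push_neg at hcon
    have hall : ∀ i ∈ R.Pi, c i = 0 := by
      intro i hi
      by_contra hne
      have h1i : (1:ℝ) ≤ (c i : ℝ) := by exact_mod_cast Nat.one_le_iff_ne_zero.mpr hne
      have hle : (c i : ℝ) ≤ ∑ j ∈ R.Pi, (c j : ℝ) :=
        Finset.single_le_sum (f := fun j => (c j : ℝ)) (fun j _ => by positivity) hi
      rw [← hfγ] at hle
      linarith
    have hγ0 : γ = 0 := by
      rw [hc]
      exact Finset.sum_eq_zero fun i hi => by rw [hall i hi]; simp
    exact R.root_ne_zero (R.Δpos_subset hγ) hγ0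
  have hlcs : ∀ k, ∀ β ∈ R.lcs I k, (k:ℝ) + 1 ≤ f β := by
    intro k
    induction k with
    | zero =>
      intro β hβ
      simpa using hfpos β (hI.1 hβ)
    | succ k ih =>
      intro β hβ
      obtain ⟨hβpos, γ, hγ, μ, hμ, hbeq⟩ := Finset.mem_filter.mp hβ
      subst hbeq
      have h1 := ih γ hγ
      have h2 := hfpos μ (hI.1 hμ)
      rw [map_add]
      push_cast
      linarith
  set B : ℝ := ∑ γ ∈ R.Δpos, f γ with hBdef
  have hB : ∀ γ ∈ R.Δpos, f γ ≤ B := fun γ hγ =>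
    Finset.single_le_sum (fun j hj => le_trans zero_le_one (hfpos j hj)) hγ
  refine ⟨⌈B⌉₊, fun k hk => ?_⟩
  by_contra hne
  obtain ⟨β, hβ⟩ := Finset.nonempty_iff_ne_empty.mpr hne
  have h1 := hlcs k β hβ
  have h2 := hB β (R.lcs_subset hI k hβ)
  have h3 : B ≤ (k:ℝ) := le_trans (Nat.le_ceil B) (by exact_mod_cast hk)
  linarith

end RootSystemData

open RootSystemData

/-- Theorem 2.3.  Let `c` be an ad-nilpotent ideal of `b` (with
root set `I`) and `α` a simple root.  Then
(i) `(|c|, α) ≥ 0`;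
(ii) `g_{-α} ⊆ n_g(c)` if and only if `(|c|, α) = 0`;
(iii) `(|c|, α) = 0` if and only if `(Σ_{k ≥ 1} |c^k|, α) = 0`, where `c¹ = c` and
`c^k = [c^{k-1}, c]`.
In particular `|c|` is dominant and `n_g(c)` is completely determined by `|c|`. -/
theorem weight_dominant_and_normalizer_criterion
    {V : Type*} [NormedAddCommGroup V] [InnerProductSpace ℝ V] [FiniteDimensional ℝ V]
    (R : RootSystemData V) (I : Finset V) (hI : R.IsUpperIdeal I)
    (α : V) (hα : α ∈ R.Pi) :
    0 ≤ ⟪idealWeight I, α⟫ ∧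
    (R.NegSimpleRootInNormalizer I α ↔ ⟪idealWeight I, α⟫ = 0) ∧
    (⟪idealWeight I, α⟫ = 0 ↔ ⟪∑ᶠ k : ℕ, idealWeight (R.lcs I k), α⟫ = 0) := by
  classical
  have hαp : α ∈ R.Δpos := R.Pi_subset hα
  have hαΔ : α ∈ R.Δ := R.Δpos_subset hαp
  have hα0 : α ≠ 0 := R.root_ne_zero hαΔ
  have hαα : 0 < ⟪α, α⟫ := R.inner_self_pos_of_mem hαΔ
  have hαα' : ⟪α, α⟫ ≠ 0 := ne_of_gt hαα
  have hW : ∀ J : Finset V, ⟪idealWeight J, α⟫ = ∑ β ∈ J, ⟪β, α⟫ := fun J => by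
    rw [idealWeight]; exact sum_inner J (fun γ => γ) α
  have hclI : ∀ β ∈ I, ⟪β, α⟫ < 0 → sRefl α β ∈ I :=
    R.stable_of_closed hαp hI.1 (fun b hb hΔ => hI.2 b hb α hαp hΔ)
  obtain ⟨hge, hiff⟩ := sum_inner_key hα0 hαα' hclI
  obtain ⟨N, hN⟩ := R.lcs_eventually_empty hI
  have hsupp : (Function.support fun k : ℕ => idealWeight (R.lcs I k)).Finite := by
    apply Set.Finite.subset (Set.finite_Iio N)
    intro k hk
    simp only [Function.mem_support] at hk
    by_contra hcon
    simp only [Set.mem_Iio, not_lt] at hcon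
    apply hk
    rw [hN k hcon, idealWeight, Finset.sum_empty]
  refine ⟨?_, ?_, ?_⟩
  · rw [hW I]; exact hge
  · rw [R.normalizer_iff_stable hI hαp, hW I]; exact hiff.symm
  · have hclK : ∀ k, ∀ β ∈ R.lcs I k, ⟪β, α⟫ < 0 → sRefl α β ∈ R.lcs I k := fun k =>
      R.stable_of_closed hαp (R.lcs_subset hI k)
        (fun b hb hΔ => (R.lcs_upper hI k).2 b hb α hαp hΔ)
    have hkey := fun k => sum_inner_key hα0 hαα' (hclK k)
    rw [hW I, finsum_eq_sum _ hsupp, sum_inner]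
    constructor
    · intro hz
      have hst : ∀ β ∈ I, sRefl α β ∈ I := hiff.mp hz
      have hstk := R.lcs_stable hI hαΔ hst
      refine Finset.sum_eq_zero fun k _ => ?_
      rw [hW (R.lcs I k)]
      exact (hkey k).2.mpr (hstk k)
    · intro hz
      have hterm : ∀ k ∈ hsupp.toFinset, (0:ℝ) ≤ ⟪idealWeight (R.lcs I k), α⟫ := by
        intro k _
        rw [hW (R.lcs I k)]
        exact (hkey k).1
      have hall := (Finset.sum_eq_zero_iff_of_nonneg hterm).mp hz
      by_cases h0 : (0:ℕ) ∈ hsupp.toFinset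
      · have h' := hall 0 h0
        rw [hW (R.lcs I 0)] at h'
        exact h'
      · rw [← hW I]
        have h' : idealWeight (R.lcs I 0) = 0 := by
          by_contra hcon
          exact h0 (hsupp.mem_toFinset.mpr hcon)
        have : idealWeight I = 0 := h'
        rw [this, inner_zero_left]


end
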